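/- For every positive integer p and every real h, (p−1) · (d/dh) κ_p(h) = τ_p(h), where κ_p(h) = 1 − (2^{−C(p,2)}/Π_{j=0}^{p−1} j!) det_{0≤i,j<p}( (−1)^i H_{i+j}(0) − H_{i+j}(h) e^{−h²} ) and τ_p(h) = (p−1)(2^{−C(p,2)}/Π_{j=0}^{p−1} j!) det_{0≤i,j<p}(A_{i,j}) with A_{i,j} = (−1)^i H_{i+j}(0) − H_{i+j}(h) e^{−h²} for i < p−1 and A_{p−1,j} = (−1)^p H_{p+j}(0) − H_{p+j}(h) e^{−h²}. -/

import Mathlib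

open scoped BigOperators

/-- The `k`-th physicists' Hermite polynomial, via
`H_k(z)/k! = Σ_m ((-1)^(k-m)/(k-m)!) (2z)^(2m-k)/(2m-k)!` (terms with negative
factorial arguments being zero). -/
noncomputable def hermiteH (k : ℕ) (z : ℝ) : ℝ :=
  (k.factorial : ℝ) * ∑ m ∈ Finset.range (k+1),
    if k ≤ 2*m then ((-1:ℝ)^(k-m) / (k-m).factorial) * ((2*z)^(2*m-k) / (2*m-k).factorial)
    else 0

noncomputable def F (k m : ℕ) (z : ℝ) : ℝ :=
  if k ≤ 2*m then (k.factorial : ℝ) * ((-1:ℝ)^(k-m) / (k-m).factorial) * ((2*z)^(2*m-k) / (2*m-k).factorial)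
  else 0

noncomputable def F' (k m : ℕ) (z : ℝ) : ℝ :=
  if k+1 ≤ 2*m then (k.factorial : ℝ) * ((-1:ℝ)^(k-m) / (k-m).factorial) *
    (2*(2*m-k)*(2*z)^(2*m-k-1) / (2*m-k).factorial)
  else 0

lemma hermiteH_eq (k : ℕ) (z : ℝ) : hermiteH k z = ∑ m ∈ Finset.range (k+1), F k m z := by
  rw [hermiteH, Finset.mul_sum]
  refine Finset.sum_congr rfl fun m _ => ?_
  unfold F; split <;> ring

lemma hasDerivAt_F (k m : ℕ) (z : ℝ) : HasDerivAt (F k m) (F' k m z) z := by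
  unfold F F'
  by_cases hk : k ≤ 2*m
  · simp only [hk, if_true]
    by_cases hk1 : k + 1 ≤ 2*m
    · simp only [hk1, if_true]
      have h1 : 1 ≤ 2*m - k := by omega
      have hd : HasDerivAt (fun z : ℝ => (2*z)^(2*m-k))
          (2*(2*m-k)*(2*z)^(2*m-k-1)) z := by
        have := ((hasDerivAt_pow (2*m-k) (2*z)).comp z ((hasDerivAt_id z).const_mul 2))
        refine this.congr_deriv ?_
        rw [Nat.cast_sub hk]
        push_cast
        ring
      have := (hd.div_const ((2*m-k).factorial : ℝ)).const_mul
        ((k.factorial : ℝ) * ((-1:ℝ)^(k-m) / (k-m).factorial))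
      exact this
    · simp only [hk1, if_false]
      have he : 2*m - k = 0 := by omega
      have : (fun z : ℝ => (k.factorial : ℝ) * ((-1:ℝ)^(k-m) / (k-m).factorial) * ((2*z)^(2*m-k) / (2*m-k).factorial))
          = fun _ : ℝ => (k.factorial : ℝ) * ((-1:ℝ)^(k-m) / (k-m).factorial) * (1 / (2*m-k).factorial) := by
        funext w; rw [he]; norm_num
      rw [this]
      exact hasDerivAt_const z _
  · simp only [hk, if_false]
    have : ¬ (k+1 ≤ 2*m) := by omega
    simp only [this, if_false]
    exact hasDerivAt_const z _

lemma F_key (k m : ℕ) (hm : m < k) (z : ℝ) :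
    F (k+1) (m+1) z = 2*z*F k m z - F' k (m+1) z := by
  by_cases h1 : k ≤ 2*m
  · obtain ⟨a, b, rfl, rfl⟩ : ∃ a b, k = 2*a+2+b ∧ m = a+1+b :=
      ⟨k-m-1, 2*m-k, by omega, by omega⟩
    unfold F F'
    rw [if_pos (by omega), if_pos (by omega), if_pos (by omega)]
    simp only [show 2*a+2+b+1-(a+1+b+1) = a+1 from by omega,
      show 2*(a+1+b+1)-(2*a+2+b+1) = b+1 from by omega,
      show 2*a+2+b-(a+1+b) = a+1 from by omega,
      show 2*a+2+b-(a+1+b+1) = a from by omega,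
      show 2*(a+1+b)-(2*a+2+b) = b from by omega,
      show 2*(a+1+b+1)-(2*a+2+b) = b+2 from by omega,
      show b+2-1 = b+1 from by omega,
      show 2*a+2+b+1 = (2*a+2+b)+1 from rfl]
    rw [Nat.factorial_succ (2*a+2+b), Nat.factorial_succ a, Nat.factorial_succ (b+1),
      Nat.factorial_succ b, pow_succ (2*z) b, pow_succ (-1:ℝ) a]
    have h2 : ((a.factorial : ℝ)) ≠ 0 := Nat.cast_ne_zero.2 a.factorial_ne_zero
    have h3 : ((b.factorial : ℝ)) ≠ 0 := Nat.cast_ne_zero.2 b.factorial_ne_zero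
    have h4 : ((a:ℝ)+1) ≠ 0 := by positivity
    have h5 : ((b:ℝ)+1) ≠ 0 := by positivity
    have h6 : ((b:ℝ)+2) ≠ 0 := by positivity
    push_cast
    field_simp
    ring
  · by_cases h2 : k = 2*m+1
    · subst h2
      unfold F F'
      rw [if_pos (by omega), if_neg (by omega), if_pos (by omega)]
      simp only [show 2*m+1+1-(m+1) = m+1 from by omega,
        show 2*(m+1)-(2*m+1+1) = 0 from by omega,
        show 2*m+1-(m+1) = m from by omega,
        show 2*(m+1)-(2*m+1) = 1 from by omega,
        show (1:ℕ)-1 = 0 from rfl]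
      rw [Nat.factorial_succ m, pow_succ (-1:ℝ) m,
        show (2*m+1+1) = (2*m+1)+1 from rfl, Nat.factorial_succ (2*m+1)]
      have h3 : ((m.factorial : ℝ)) ≠ 0 := Nat.cast_ne_zero.2 m.factorial_ne_zero
      have h4 : ((m:ℝ)+1) ≠ 0 := by positivity
      push_cast
      field_simp
      ring
    · unfold F F'
      rw [if_neg (by omega), if_neg (by omega), if_neg (by omega)]
      ring

lemma F_last (k : ℕ) (z : ℝ) : F (k+1) (k+1) z = 2*z*F k k z := by
  unfold F
  rw [if_pos (by omega), if_pos (by omega)]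
  simp only [Nat.sub_self, show 2*(k+1)-(k+1) = k+1 from by omega,
    show 2*k-k = k from by omega, Nat.factorial_zero, pow_zero, pow_succ (2*z) k,
    Nat.factorial_succ k]
  have h2 : ((k.factorial : ℝ)) ≠ 0 := Nat.cast_ne_zero.2 k.factorial_ne_zero
  have h4 : ((k:ℝ)+1) ≠ 0 := by positivity
  push_cast
  field_simp

lemma hermiteH_succ (k : ℕ) (z : ℝ) :
    hermiteH (k+1) z = 2*z*hermiteH k z - ∑ m ∈ Finset.range (k+1), F' k m z := by
  rw [hermiteH_eq, hermiteH_eq]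
  rw [Finset.sum_range_succ' (fun m => F (k+1) m z) (k+1)]
  have h0 : F (k+1) 0 z = 0 := by unfold F; rw [if_neg (by omega)]
  rw [h0, add_zero, Finset.sum_range_succ (fun m => F (k+1) (m+1) z) k]
  rw [Finset.sum_range_succ' (fun m => F' k m z) k]
  have h0' : F' k 0 z = 0 := by unfold F'; rw [if_neg (by omega)]
  rw [h0', add_zero, Finset.sum_range_succ (fun m => F k m z) k]
  rw [Finset.sum_congr rfl (fun m hm => F_key k m (Finset.mem_range.1 hm) z), F_last]
  rw [Finset.sum_sub_distrib, mul_add, Finset.mul_sum]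
  ring

lemma hasDerivAt_hermiteH (k : ℕ) (z : ℝ) :
    HasDerivAt (fun w => hermiteH k w) (2*z*hermiteH k z - hermiteH (k+1) z) z := by
  have hs : HasDerivAt (fun w => ∑ m ∈ Finset.range (k+1), F k m w)
      (∑ m ∈ Finset.range (k+1), F' k m z) z :=
    HasDerivAt.fun_sum fun m _ => hasDerivAt_F k m z
  have : (fun w => hermiteH k w) = fun w => ∑ m ∈ Finset.range (k+1), F k m w := by
    funext w; exact hermiteH_eq k w
  rw [this, hermiteH_succ]
  simpa using hs

lemma hasDerivAt_g (k : ℕ) (x : ℝ) :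
    HasDerivAt (fun t => hermiteH k t * Real.exp (-t^2))
      (-(hermiteH (k+1) x * Real.exp (-x^2))) x := by
  have h1 := hasDerivAt_hermiteH k x
  have h2 : HasDerivAt (fun t : ℝ => Real.exp (-t^2)) (Real.exp (-x^2) * (-(2*x))) x := by
    have hp : HasDerivAt (fun t : ℝ => -t^2) (-(2*x)) x := by
      simpa using (hasDerivAt_pow 2 x).fun_neg
    exact hp.exp
  have := h1.fun_mul h2
  refine this.congr_deriv ?_
  ring

lemma hermiteH_neg (k : ℕ) (z : ℝ) : hermiteH k (-z) = (-1)^k * hermiteH k z := by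
  have hterm : ∀ m ∈ Finset.range (k+1),
      (if k ≤ 2*m then ((-1:ℝ)^(k-m) / (k-m).factorial) * ((2*(-z))^(2*m-k) / (2*m-k).factorial) else 0)
      = (-1:ℝ)^k * (if k ≤ 2*m then ((-1:ℝ)^(k-m) / (k-m).factorial) * ((2*z)^(2*m-k) / (2*m-k).factorial) else 0) := by
    intro m _
    by_cases hk : k ≤ 2*m
    · have hsg : (-1:ℝ)^(2*m-k) = (-1)^k := by
        have hpar : Even (2*m-k) ↔ Even k := by
          rw [Nat.even_sub hk]
          simp [Nat.even_mul]
        rcases Nat.even_or_odd k with he | ho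
        · rw [he.neg_one_pow, (hpar.2 he).neg_one_pow]
        · rw [ho.neg_one_pow, (Nat.odd_iff.2 (by
            rcases Nat.even_or_odd (2*m-k) with h2 | h2
            · exact absurd (hpar.1 h2) (Nat.not_even_iff_odd.2 ho)
            · exact Nat.odd_iff.1 h2)).neg_one_pow]
      rw [if_pos hk, if_pos hk, show (2*(-z) : ℝ) = (-1) * (2*z) from by ring,
        mul_pow, hsg]
      ring
    · rw [if_neg hk, if_neg hk]; ring
  rw [hermiteH, hermiteH, Finset.sum_congr rfl hterm, ← Finset.mul_sum]
  ring

open Matrix in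
lemma hasDerivAt_det {n : ℕ} (A : ℝ → Matrix (Fin n) (Fin n) ℝ)
    (A' : Matrix (Fin n) (Fin n) ℝ) (x : ℝ)
    (hA : ∀ i j, HasDerivAt (fun t => A t i j) (A' i j) x) :
    HasDerivAt (fun t => (A t).det)
      (∑ i : Fin n, ((A x).updateRow i (A' i)).det) x := by
  have step : HasDerivAt (fun t => (A t).det)
      (∑ σ : Equiv.Perm (Fin n), ((Equiv.Perm.sign σ : ℤ) : ℝ) *
        ∑ i : Fin n, (∏ j ∈ Finset.univ.erase i, A x (σ j) j) • A' (σ i) i) x := by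
    have : (fun t => (A t).det) = fun t => ∑ σ : Equiv.Perm (Fin n),
        ((Equiv.Perm.sign σ : ℤ) : ℝ) * ∏ i : Fin n, A t (σ i) i := by
      funext t; rw [Matrix.det_apply']
    rw [this]
    exact HasDerivAt.fun_sum fun σ _ =>
      (HasDerivAt.fun_finsetProd (fun i _ => hA (σ i) i)).const_mul _
  convert step using 1
  have key : ∀ σ : Equiv.Perm (Fin n),
      ∑ r : Fin n, ((Equiv.Perm.sign σ : ℤ):ℝ) *
        ∏ j : Fin n, ((A x).updateRow r (A' r)) (σ j) j
      = ((Equiv.Perm.sign σ : ℤ):ℝ) *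
        ∑ i : Fin n, (∏ j ∈ Finset.univ.erase i, A x (σ j) j) • A' (σ i) i := by
    intro σ
    rw [Finset.mul_sum]
    rw [← Equiv.sum_comp σ
      (fun r => ((Equiv.Perm.sign σ : ℤ):ℝ) * ∏ j : Fin n, ((A x).updateRow r (A' r)) (σ j) j)]
    refine Finset.sum_congr rfl fun i _ => ?_
    congr 1
    rw [smul_eq_mul, ← Finset.mul_prod_erase Finset.univ
      (fun j => ((A x).updateRow (σ i) (A' (σ i))) (σ j) j) (Finset.mem_univ i)]
    rw [mul_comm ((∏ j ∈ Finset.univ.erase i, A x (σ j) j)) _]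
    congr 1
    · simp [Matrix.updateRow_self]
    · refine Finset.prod_congr rfl fun j hj => ?_
      have : σ j ≠ σ i := fun hc => (Finset.mem_erase.1 hj).1 (σ.injective hc)
      simp [Matrix.updateRow_ne this]
  simp only [Matrix.det_apply']
  rw [Finset.sum_comm]
  exact Finset.sum_congr rfl fun σ _ => key σ

/-- `κ_p(h) = 1 − (2^{-C(p,2)}/Π_{j<p} j!) det_{0≤i,j<p}( (-1)^i H_{i+j}(0) − H_{i+j}(h)e^{-h²} )`. -/
noncomputable def kappa (p : ℕ) (h : ℝ) : ℝ :=
  1 - (((2:ℝ)^(p.choose 2))⁻¹ / ∏ j ∈ Finset.range p, (j.factorial : ℝ)) *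
    Matrix.det (Matrix.of fun i j : Fin p =>
      (-1:ℝ)^(i : ℕ) * hermiteH ((i : ℕ)+(j : ℕ)) 0
        - hermiteH ((i : ℕ)+(j : ℕ)) h * Real.exp (-h^2))

/-- `τ_p(h)`: as `κ_p`, but with the last row of the determinant replaced as in the paper,
and an extra factor `p − 1`. -/
noncomputable def tau (p : ℕ) (h : ℝ) : ℝ :=
  ((p : ℝ) - 1) * (((2:ℝ)^(p.choose 2))⁻¹ / ∏ j ∈ Finset.range p, (j.factorial : ℝ)) *
    Matrix.det (Matrix.of fun i j : Fin p =>
      if (i : ℕ) < p - 1 then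
        (-1:ℝ)^(i : ℕ) * hermiteH ((i : ℕ)+(j : ℕ)) 0
          - hermiteH ((i : ℕ)+(j : ℕ)) h * Real.exp (-h^2)
      else
        (-1:ℝ)^p * hermiteH (p+(j : ℕ)) 0 - hermiteH (p+(j : ℕ)) h * Real.exp (-h^2))

/-- `(p−1) · (d/dh) κ_p(h) = τ_p(h)`. -/
theorem stmt10 (p : ℕ) (hp : 0 < p) (h : ℝ) :
    ∃ d : ℝ, HasDerivAt (kappa p) d h ∧ ((p : ℝ) - 1) * d = tau p h := by
  classical
  set c : ℝ := ((2:ℝ)^(p.choose 2))⁻¹ / ∏ j ∈ Finset.range p, (j.factorial : ℝ) with hc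
  set A : ℝ → Matrix (Fin p) (Fin p) ℝ := fun t => Matrix.of fun i j : Fin p =>
      (-1:ℝ)^(i : ℕ) * hermiteH ((i : ℕ)+(j : ℕ)) 0
        - hermiteH ((i : ℕ)+(j : ℕ)) t * Real.exp (-t^2) with hA
  set A' : Matrix (Fin p) (Fin p) ℝ := fun i j =>
      hermiteH ((i : ℕ)+(j : ℕ)+1) h * Real.exp (-h^2) with hA'
  have hAd : ∀ i j : Fin p, HasDerivAt (fun t => A t i j) (A' i j) h := by
    intro i j
    have := (hasDerivAt_g ((i:ℕ)+(j:ℕ)) h).const_sub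
      ((-1:ℝ)^(i : ℕ) * hermiteH ((i : ℕ)+(j : ℕ)) 0)
    simpa [hA, hA'] using this
  have hdet := hasDerivAt_det A A' h hAd
  set S : ℝ := ∑ i : Fin p, ((A h).updateRow i (A' i)).det with hS
  have hkappa : HasDerivAt (kappa p) (-(c * S)) h := by
    have : kappa p = fun t => 1 - c * (A t).det := rfl
    rw [this]
    exact (hdet.const_mul c).const_sub 1
  refine ⟨-(c * S), hkappa, ?_⟩
  -- rows
  set R : Fin p → Fin p → ℝ := fun i j =>
      (-1:ℝ)^((i:ℕ)+1) * hermiteH ((i:ℕ)+1+(j:ℕ)) 0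
        - hermiteH ((i:ℕ)+1+(j:ℕ)) h * Real.exp (-h^2) with hR
  set W : Fin p → Fin p → ℝ := fun i j =>
      (-1:ℝ)^((i:ℕ)+1) * hermiteH ((i:ℕ)+1+(j:ℕ)) 0 with hW
  set B : Matrix (Fin p) (Fin p) ℝ := Matrix.of fun i j : Fin p =>
      if (i : ℕ) < p - 1 then
        (-1:ℝ)^(i : ℕ) * hermiteH ((i : ℕ)+(j : ℕ)) 0
          - hermiteH ((i : ℕ)+(j : ℕ)) h * Real.exp (-h^2)
      else
        (-1:ℝ)^p * hermiteH (p+(j : ℕ)) 0 - hermiteH (p+(j : ℕ)) h * Real.exp (-h^2)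
    with hB
  have split : ∀ i : Fin p, A' i = fun j => (-1 : ℝ) * R i j + W i j := by
    intro i; funext j
    simp only [hA', hR, hW, show (i:ℕ)+(j:ℕ)+1 = (i:ℕ)+1+(j:ℕ) from by omega]
    ring
  have hdetsplit : ∀ i : Fin p, ((A h).updateRow i (A' i)).det
      = -(((A h).updateRow i (R i)).det) + ((A h).updateRow i (W i)).det := by
    intro i
    rw [show (A' i) = ((-1 : ℝ) • R i) + W i from by
      funext j; simpa using congrFun (split i) j]
    rw [Matrix.det_updateRow_add, Matrix.det_updateRow_smul]
    ring
  have hRdet : ∀ i : Fin p, ((A h).updateRow i (R i)).det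
      = if (i : ℕ) = p - 1 then B.det else 0 := by
    intro i
    by_cases hi : (i : ℕ) = p - 1
    · rw [if_pos hi]
      congr 1
      funext a b
      rcases eq_or_ne a i with rfl | hne
      · rw [Matrix.updateRow_self]
        simp only [hB, hR, Matrix.of_apply, hi, show p - 1 + 1 = p from by omega]
        rw [if_neg (lt_irrefl _)]
      · rw [Matrix.updateRow_ne hne]
        have ha : (a : ℕ) < p - 1 := by
          have := a.isLt
          have hne' : (a : ℕ) ≠ p - 1 := fun hcon => hne (Fin.ext (by rw [hcon, hi]))
          omega
        simp only [hA, hB, Matrix.of_apply, if_pos ha]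
    · rw [if_neg hi]
      have hi1 : (i : ℕ) + 1 < p := by have := i.isLt; omega
      apply Matrix.det_zero_of_row_eq (i := i) (j := ⟨(i:ℕ)+1, hi1⟩)
      · exact fun hcon => by simpa using congrArg Fin.val hcon
      · funext j
        rw [Matrix.updateRow_self, Matrix.updateRow_ne (by
          intro hcon
          have := congrArg Fin.val hcon
          simp at this)]
        simp [hA, hR]
  have hRsum : ∑ i : Fin p, ((A h).updateRow i (R i)).det = B.det := by
    rw [Finset.sum_congr rfl fun i _ => hRdet i]
    rw [Finset.sum_eq_single (⟨p-1, by omega⟩ : Fin p)]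
    · rw [if_pos rfl]
    · intro b _ hb
      rw [if_neg (fun hcon => hb (Fin.ext hcon))]
    · intro hcon; exact absurd (Finset.mem_univ _) hcon
  set T : ℝ := ∑ i : Fin p, ((A h).updateRow i (W i)).det with hT
  have hSval : S = -(B.det) + T := by
    rw [hS, Finset.sum_congr rfl fun i _ => hdetsplit i, Finset.sum_add_distrib,
      Finset.sum_neg_distrib, hRsum]
  -- evenness argument : T = 0
  set C : ℝ → Matrix (Fin p) (Fin p) ℝ := fun x => Matrix.of fun i j : Fin p =>
      (-1:ℝ)^(i : ℕ) * (hermiteH ((i:ℕ)+(j:ℕ)) x * Real.exp (-x^2))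
        - hermiteH ((i:ℕ)+(j:ℕ)) h * Real.exp (-h^2) with hCdef
  have hC0 : C 0 = A h := by
    funext i j
    simp only [hCdef, hA, Matrix.of_apply]
    norm_num
  have hCd : ∀ i j : Fin p, HasDerivAt (fun x => C x i j) (W i j) 0 := by
    intro i j
    have hg := ((hasDerivAt_g ((i:ℕ)+(j:ℕ)) 0).const_mul ((-1:ℝ)^(i:ℕ))).sub_const
      (hermiteH ((i:ℕ)+(j:ℕ)) h * Real.exp (-h^2))
    have : (-1:ℝ)^(i:ℕ) * -(hermiteH ((i:ℕ)+(j:ℕ)+1) 0 * Real.exp (-(0:ℝ)^2)) = W i j := by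
      rw [hW, show ((i:ℕ)+(j:ℕ)+1) = (i:ℕ)+1+(j:ℕ) from by omega, pow_succ]
      norm_num
      ring
    rw [← this]
    exact hg
  have hGd : HasDerivAt (fun x => (C x).det) T 0 := by
    have := hasDerivAt_det C W 0 hCd
    rwa [hC0] at this
  have heven : ∀ x : ℝ, (C (-x)).det = (C x).det := by
    intro x
    have hCT : C (-x) = Matrix.transpose (C x) := by
      funext i j
      simp only [hCdef, Matrix.transpose_apply, Matrix.of_apply]
      rw [show ((j:ℕ)+(i:ℕ)) = (i:ℕ)+(j:ℕ) from by omega,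
        hermiteH_neg, show (-(-x)^2 : ℝ) = -x^2 from by ring]
      have key : ((-1:ℝ))^((i:ℕ)) * (-1)^((i:ℕ)+(j:ℕ)) = (-1)^((j:ℕ)) := by
        rw [← pow_add, show (i:ℕ)+((i:ℕ)+(j:ℕ)) = 2*(i:ℕ)+(j:ℕ) from by omega,
          pow_add, pow_mul]
        norm_num
      linear_combination (hermiteH ((i:ℕ)+(j:ℕ)) x * Real.exp (-x^2)) * key
    rw [hCT, Matrix.det_transpose]
  have hTzero : T = 0 := by
    have hneg : HasDerivAt (fun x : ℝ => (C (-x)).det) (T * (-1)) 0 := by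
      have h1 : HasDerivAt (fun x : ℝ => (C x).det) T (-(0:ℝ)) := by
        rwa [neg_zero]
      exact HasDerivAt.comp 0 h1 (hasDerivAt_neg 0)
    have hfun : (fun x : ℝ => (C (-x)).det) = fun x : ℝ => (C x).det :=
      funext heven
    rw [hfun] at hneg
    have := hGd.unique hneg
    linarith
  have htau : tau p h = ((p:ℝ)-1) * c * B.det := rfl
  rw [htau, hSval, hTzero]
  ring
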